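/- Let a ∈ ℝ, a ≠ 0, and let U = {(x,y,p,q) ∈ ℝ⁴ : y ≠ 0 and a(2qy − p²) > 0}. Then the smooth function F : U → ℝ defined by F(x,y,p,q) = (a(2qy − p²))^{3/2} / y² satisfies both the Wuenschmann condition A = F_y + D(K) − (2/3) F_q K ≡ 0 and the Cartan condition G = D(D(F_{qq})) − D(F_{qp}) + F_{qy} ≡ 0 on U, where D = ∂_x + p ∂_y + q ∂_p + F ∂_q and K = (1/6) D(F_q) − (1/9) F_q² − (1/2) F_p. -/

import Mathlib

noncomputable section

/-- Points of the second jet space: coordinates `(x, y, p, q)`. -/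
abbrev V4 : Type := ℝ × ℝ × ℝ × ℝ

/-- Directional (partial) derivative of `f` at `m` in the constant direction `v`. -/
def pd (v : V4) (f : V4 → ℝ) (m : V4) : ℝ := fderiv ℝ f m v

def ex : V4 := (1, 0, 0, 0)
def ey : V4 := (0, 1, 0, 0)
def ep : V4 := (0, 0, 1, 0)
def eq' : V4 := (0, 0, 0, 1)

/-- The total derivative operator `(Dh)(m) = h_x + p h_y + q h_p + F h_q`. -/
def Dtot (F : V4 → ℝ) (h : V4 → ℝ) (m : V4) : ℝ :=
  pd ex h m + m.2.2.1 * pd ey h m + m.2.2.2 * pd ep h m + F m * pd eq' h m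

/-- `K = (1/6) D(F_q) − (1/9) F_q² − (1/2) F_p`. -/
def Kf (F : V4 → ℝ) (m : V4) : ℝ :=
  (1/6) * Dtot F (pd eq' F) m - (1/9) * (pd eq' F m)^2 - (1/2) * pd ep F m

/-- The Wuenschmann expression `A = F_y + D(K) − (2/3) F_q K`. -/
def Wu (F : V4 → ℝ) (m : V4) : ℝ :=
  pd ey F m + Dtot F (Kf F) m - (2/3) * pd eq' F m * Kf F m

/-- The Cartan expression `G = D(D(F_{qq})) − D(F_{qp}) + F_{qy}`. -/
def CartanG (F : V4 → ℝ) (m : V4) : ℝ :=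
  Dtot F (Dtot F (pd eq' (pd eq' F))) m - Dtot F (pd ep (pd eq' F)) m +
    pd ey (pd eq' F) m

namespace EW

open ContinuousLinearMap

/-- coordinate projections as continuous linear maps -/
def LY : V4 →L[ℝ] ℝ := (fst ℝ ℝ (ℝ × ℝ)).comp (snd ℝ ℝ (ℝ × ℝ × ℝ))
def LP : V4 →L[ℝ] ℝ :=
  ((fst ℝ ℝ ℝ).comp (snd ℝ ℝ (ℝ × ℝ))).comp (snd ℝ ℝ (ℝ × ℝ × ℝ))
def LQ : V4 →L[ℝ] ℝ :=
  ((snd ℝ ℝ ℝ).comp (snd ℝ ℝ (ℝ × ℝ))).comp (snd ℝ ℝ (ℝ × ℝ × ℝ))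

@[simp] lemma LY_apply (v : V4) : LY v = v.2.1 := rfl
@[simp] lemma LP_apply (v : V4) : LP v = v.2.2.1 := rfl
@[simp] lemma LQ_apply (v : V4) : LQ v = v.2.2.2 := rfl

lemma hY (m : V4) : HasFDerivAt (fun m : V4 => m.2.1) LY m :=
  hasFDerivAt_fst.comp m hasFDerivAt_snd
lemma hP (m : V4) : HasFDerivAt (fun m : V4 => m.2.2.1) LP m :=
  (hasFDerivAt_fst.comp m.2 hasFDerivAt_snd).comp m hasFDerivAt_snd
lemma hQ (m : V4) : HasFDerivAt (fun m : V4 => m.2.2.2) LQ m :=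
  (hasFDerivAt_snd.comp m.2 hasFDerivAt_snd).comp m hasFDerivAt_snd

/-- the quantity `s = a (2 q y − p²)`. -/
def sq' (a : ℝ) (m : V4) : ℝ := a * (2 * m.2.2.2 * m.2.1 - m.2.2.1 ^ 2)

/-- `w = √(a (2 q y − p²))`. -/
def wf (a : ℝ) (m : V4) : ℝ := Real.sqrt (sq' a m)

/-- basic monomials `c yⁱ pʲ qᵏ wⁿ`. -/
def mono (a c : ℝ) (i : ℤ) (j k : ℕ) (n : ℤ) (m : V4) : ℝ :=
  c * m.2.1 ^ i * m.2.2.1 ^ j * m.2.2.2 ^ k * wf a m ^ n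

lemma hasFDerivAt_sq (a : ℝ) (m : V4) :
    HasFDerivAt (sq' a)
      ((2*a*m.2.2.2) • LY + (-(2*a*m.2.2.1)) • LP + (2*a*m.2.1) • LQ) m := by
  have H := ((((hQ m).const_mul 2).mul (hY m)).sub
    ((hasDerivAt_pow 2 m.2.2.1).comp_hasFDerivAt m (hP m))).const_mul a
  refine H.congr_fderiv ?_
  refine ContinuousLinearMap.ext fun v => ?_
  simp [Function.comp]
  ring

lemma hasFDerivAt_wf (a : ℝ) (m : V4) (hs : sq' a m ≠ 0) :
    HasFDerivAt (wf a)
      ((1/(2 * wf a m)) •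
        ((2*a*m.2.2.2) • LY + (-(2*a*m.2.2.1)) • LP + (2*a*m.2.1) • LQ)) m :=
  (Real.hasDerivAt_sqrt hs).comp_hasFDerivAt m (hasFDerivAt_sq a m)

lemma hasFDerivAt_mono (a c : ℝ) (i : ℤ) (j k : ℕ) (n : ℤ) (m : V4)
    (hy : m.2.1 ≠ 0) (hs : 0 < sq' a m) :
    HasFDerivAt (mono a c i j k n)
      ((mono a (c*i) (i-1) j k n m + mono a (c*n*a) i j (k+1) (n-2) m) • LY +
       (mono a (c*j) i (j-1) k n m + mono a (-(c*n*a)) i (j+1) k (n-2) m) • LP +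
       (mono a (c*k) i j (k-1) n m + mono a (c*n*a) (i+1) j k (n-2) m) • LQ) m := by
  have hw : wf a m ≠ 0 := by
    have : 0 < wf a m := Real.sqrt_pos.mpr hs
    exact this.ne'
  have h1 : HasFDerivAt (fun m : V4 => m.2.1 ^ i)
      (((i : ℝ) * m.2.1 ^ (i-1)) • LY) m :=
    (hasDerivAt_zpow i _ (Or.inl hy)).comp_hasFDerivAt (h₂ := fun x : ℝ => x ^ i) m (hY m)
  have h2 : HasFDerivAt (fun m : V4 => m.2.2.1 ^ j)
      (((j : ℝ) * m.2.2.1 ^ (j-1)) • LP) m :=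
    (hasDerivAt_pow j _).comp_hasFDerivAt m (hP m)
  have h3 : HasFDerivAt (fun m : V4 => m.2.2.2 ^ k)
      (((k : ℝ) * m.2.2.2 ^ (k-1)) • LQ) m :=
    (hasDerivAt_pow k _).comp_hasFDerivAt m (hQ m)
  have h4 : HasFDerivAt (fun m : V4 => wf a m ^ n)
      (((n : ℝ) * wf a m ^ (n-1)) •
        ((1/(2 * wf a m)) •
          ((2*a*m.2.2.2) • LY + (-(2*a*m.2.2.1)) • LP + (2*a*m.2.1) • LQ))) m :=
    (hasDerivAt_zpow n _ (Or.inl hw)).comp_hasFDerivAt m (hasFDerivAt_wf a m hs.ne')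
  have H := (((h1.const_mul c).mul h2).mul h3).mul h4
  refine H.congr_fderiv ?_
  refine ContinuousLinearMap.ext fun v => ?_
  simp [mono]
  rw [zpow_add_one₀ hy, show n - 2 = n - 1 - 1 by ring,
    zpow_sub_one₀ hw (n-1), zpow_sub_one₀ hw n]
  field_simp
  ring

lemma pd_mono_x (a c : ℝ) (i : ℤ) (j k : ℕ) (n : ℤ) (m : V4)
    (hy : m.2.1 ≠ 0) (hs : 0 < sq' a m) :
    pd ex (mono a c i j k n) m = 0 := by
  rw [pd, (hasFDerivAt_mono a c i j k n m hy hs).fderiv]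
  simp [ex]

lemma pd_mono_y (a c : ℝ) (i : ℤ) (j k : ℕ) (n : ℤ) (m : V4)
    (hy : m.2.1 ≠ 0) (hs : 0 < sq' a m) :
    pd ey (mono a c i j k n) m
      = mono a (c*i) (i-1) j k n m + mono a (c*n*a) i j (k+1) (n-2) m := by
  rw [pd, (hasFDerivAt_mono a c i j k n m hy hs).fderiv]
  simp [ey]

lemma pd_mono_p (a c : ℝ) (i : ℤ) (j k : ℕ) (n : ℤ) (m : V4)
    (hy : m.2.1 ≠ 0) (hs : 0 < sq' a m) :
    pd ep (mono a c i j k n) m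
      = mono a (c*j) i (j-1) k n m + mono a (-(c*n*a)) i (j+1) k (n-2) m := by
  rw [pd, (hasFDerivAt_mono a c i j k n m hy hs).fderiv]
  simp [ep]

lemma pd_mono_q (a c : ℝ) (i : ℤ) (j k : ℕ) (n : ℤ) (m : V4)
    (hy : m.2.1 ≠ 0) (hs : 0 < sq' a m) :
    pd eq' (mono a c i j k n) m
      = mono a (c*k) i j (k-1) n m + mono a (c*n*a) (i+1) j k (n-2) m := by
  rw [pd, (hasFDerivAt_mono a c i j k n m hy hs).fderiv]
  simp [eq']

/-- the open domain. -/
def UU (a : ℝ) : Set V4 := {m : V4 | m.2.1 ≠ 0 ∧ 0 < sq' a m}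

lemma isOpen_UU (a : ℝ) : IsOpen (UU a) := by
  have h1 : Continuous (fun m : V4 => m.2.1) := by fun_prop
  have h2 : Continuous (sq' a) := by unfold sq'; fun_prop
  have : UU a = (fun m : V4 => m.2.1) ⁻¹' ({0}ᶜ) ∩ sq' a ⁻¹' Set.Ioi 0 := rfl
  rw [this]
  exact ((isOpen_compl_singleton).preimage h1).inter (isOpen_Ioi.preimage h2)

lemma pd_congr_on {a : ℝ} {f g : V4 → ℝ} (hfg : Set.EqOn f g (UU a)) {m : V4}
    (hm : m ∈ UU a) (v : V4) : pd v f m = pd v g m := by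
  unfold pd
  rw [Filter.EventuallyEq.fderiv_eq
    (Filter.eventuallyEq_of_mem ((isOpen_UU a).mem_nhds hm) hfg)]

/-- `F` itself on `U`: `F = y⁻² w³`. -/
def g1 (a : ℝ) : V4 → ℝ := fun m => mono a 1 (-2) 0 0 3 m
/-- `F_q = 3 a y⁻¹ w`. -/
def g2 (a : ℝ) : V4 → ℝ := fun m => mono a (3*a) (-1) 0 0 1 m
/-- `K = a y⁻² p w − (a²/2) y⁻² w²`. -/
def kk (a : ℝ) : V4 → ℝ :=
  fun m => mono a a (-2) 1 0 1 m + mono a (-(a^2/2)) (-2) 0 0 2 m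
/-- `F_qq = 3 a² w⁻¹`. -/
def g4 (a : ℝ) : V4 → ℝ := fun m => mono a (3*a^2) 0 0 0 (-1) m
/-- `D(F_qq) = −3 a³ y⁻¹`. -/
def g5 (a : ℝ) : V4 → ℝ := fun m => mono a (-(3*a^3)) (-1) 0 0 0 m
/-- `F_qp = −3 a² y⁻¹ p w⁻¹`. -/
def g6 (a : ℝ) : V4 → ℝ := fun m => mono a (-(3*a^2)) (-1) 1 0 (-1) m

/-- the function in the statement. -/
def Fd (a : ℝ) : V4 → ℝ := fun m : V4 =>
  (a * (2 * m.2.2.2 * m.2.1 - m.2.2.1^2)) ^ ((3:ℝ)/2) / m.2.1^2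

lemma F_eqOn (a : ℝ) : Set.EqOn (Fd a) (g1 a) (UU a) := by
  intro x hx
  obtain ⟨hy, hs⟩ := hx
  have hw2 : wf a x ^ 2 = sq' a x := Real.sq_sqrt hs.le
  have h3 : sq' a x ^ ((3:ℝ)/2) = wf a x ^ (3:ℕ) := by
    rw [show ((3:ℝ)/2) = (1/2) * 3 by norm_num, Real.rpow_mul hs.le,
      show (3:ℝ) = ((3:ℕ):ℝ) by norm_num, Real.rpow_natCast, wf,
      Real.sqrt_eq_rpow]
  have : Fd a x = sq' a x ^ ((3:ℝ)/2) / x.2.1 ^ 2 := rfl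
  rw [this, h3, g1, mono]
  simp only [zpow_neg, zpow_ofNat, pow_zero, zpow_one]
  field_simp


lemma wf_pos {a : ℝ} {x : V4} (hs : 0 < sq' a x) : 0 < wf a x :=
  Real.sqrt_pos.mpr hs

lemma wf_sq {a : ℝ} {x : V4} (hs : 0 < sq' a x) : wf a x ^ 2 = sq' a x :=
  Real.sq_sqrt hs.le

lemma Fx_eq {a : ℝ} {x : V4} (hx : x ∈ UU a) : pd ex (Fd a) x = 0 := by
  rw [pd_congr_on (F_eqOn a) hx ex]
  unfold g1
  rw [pd_mono_x a 1 (-2) 0 0 3 x hx.1 hx.2]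

lemma Fy_eq {a : ℝ} {x : V4} (hx : x ∈ UU a) :
    pd ey (Fd a) x = mono a (-2) (-3) 0 0 3 x + mono a (3*a) (-2) 0 1 1 x := by
  rw [pd_congr_on (F_eqOn a) hx ey]
  unfold g1
  rw [pd_mono_y a 1 (-2) 0 0 3 x hx.1 hx.2]
  norm_num [mono]

lemma Fp_eq {a : ℝ} {x : V4} (hx : x ∈ UU a) :
    pd ep (Fd a) x = mono a (-(3*a)) (-2) 1 0 1 x := by
  rw [pd_congr_on (F_eqOn a) hx ep]
  unfold g1
  rw [pd_mono_p a 1 (-2) 0 0 3 x hx.1 hx.2]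
  norm_num [mono]

lemma Fq_eqOn (a : ℝ) : Set.EqOn (pd eq' (Fd a)) (g2 a) (UU a) := by
  intro x hx
  rw [pd_congr_on (F_eqOn a) hx eq']
  unfold g1 g2
  rw [pd_mono_q a 1 (-2) 0 0 3 x hx.1 hx.2]
  norm_num [mono]

lemma Fqx_eq {a : ℝ} {x : V4} (hx : x ∈ UU a) : pd ex (pd eq' (Fd a)) x = 0 := by
  rw [pd_congr_on (Fq_eqOn a) hx ex]
  unfold g2
  rw [pd_mono_x a (3*a) (-1) 0 0 1 x hx.1 hx.2]

lemma Fqy_eq {a : ℝ} {x : V4} (hx : x ∈ UU a) :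
    pd ey (pd eq' (Fd a)) x
      = mono a (-(3*a)) (-2) 0 0 1 x + mono a (3*a^2) (-1) 0 1 (-1) x := by
  rw [pd_congr_on (Fq_eqOn a) hx ey]
  unfold g2
  rw [pd_mono_y a (3*a) (-1) 0 0 1 x hx.1 hx.2]
  simp only [mono]
  push_cast
  ring

lemma Fqp_eqOn (a : ℝ) : Set.EqOn (pd ep (pd eq' (Fd a))) (g6 a) (UU a) := by
  intro x hx
  rw [pd_congr_on (Fq_eqOn a) hx ep]
  unfold g2 g6
  rw [pd_mono_p a (3*a) (-1) 0 0 1 x hx.1 hx.2]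
  simp only [mono]
  push_cast
  ring

lemma Fqq_eqOn (a : ℝ) : Set.EqOn (pd eq' (pd eq' (Fd a))) (g4 a) (UU a) := by
  intro x hx
  rw [pd_congr_on (Fq_eqOn a) hx eq']
  unfold g2 g4
  rw [pd_mono_q a (3*a) (-1) 0 0 1 x hx.1 hx.2]
  simp only [mono]
  push_cast
  ring

lemma K_eqOn (a : ℝ) : Set.EqOn (Kf (Fd a)) (kk a) (UU a) := by
  intro x hx
  have hy := hx.1
  have hs := hx.2
  have hw := (wf_pos hs).ne'
  unfold Kf Dtot
  rw [Fqx_eq hx, Fqy_eq hx, Fqp_eqOn a hx, Fqq_eqOn a hx, Fq_eqOn a hx,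
    Fp_eq hx, F_eqOn a hx]
  unfold g1 g2 g4 g6 kk mono
  simp only [zpow_neg, zpow_ofNat, zpow_one, zpow_zero, pow_zero, pow_one]
  field_simp
  ring


lemma pd_kk (a : ℝ) (v m : V4) (hy : m.2.1 ≠ 0) (hs : 0 < sq' a m) :
    pd v (kk a) m
      = pd v (mono a a (-2) 1 0 1) m + pd v (mono a (-(a^2/2)) (-2) 0 0 2) m := by
  have h1 := hasFDerivAt_mono a a (-2) 1 0 1 m hy hs
  have h2 := hasFDerivAt_mono a (-(a^2/2)) (-2) 0 0 2 m hy hs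
  unfold pd kk
  rw [HasFDerivAt.fderiv (f := fun x => mono a a (-2) 1 0 1 x + mono a (-(a^2/2)) (-2) 0 0 2 x) (h1.add h2), h1.fderiv, h2.fderiv]
  simp

lemma Wu_eq (a : ℝ) (ha : a ≠ 0) {m : V4} (hm : m ∈ UU a) : Wu (Fd a) m = 0 := by
  have hy := hm.1
  have hs := hm.2
  have hw := (wf_pos hs).ne'
  have hw2 := wf_sq hs
  have hq : m.2.2.2 = (wf a m ^ 2 + a * m.2.2.1 ^ 2) / (2 * a * m.2.1) := by
    rw [hw2]; unfold sq'; field_simp; ring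
  unfold Wu Dtot
  rw [Fy_eq hm, Fq_eqOn a hm, K_eqOn a hm,
    pd_congr_on (K_eqOn a) hm ex, pd_congr_on (K_eqOn a) hm ey,
    pd_congr_on (K_eqOn a) hm ep, pd_congr_on (K_eqOn a) hm eq',
    pd_kk a ex m hy hs, pd_kk a ey m hy hs, pd_kk a ep m hy hs,
    pd_kk a eq' m hy hs, F_eqOn a hm,
    pd_mono_x a a (-2) 1 0 1 m hy hs, pd_mono_x a (-(a^2/2)) (-2) 0 0 2 m hy hs,
    pd_mono_y a a (-2) 1 0 1 m hy hs, pd_mono_y a (-(a^2/2)) (-2) 0 0 2 m hy hs,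
    pd_mono_p a a (-2) 1 0 1 m hy hs, pd_mono_p a (-(a^2/2)) (-2) 0 0 2 m hy hs,
    pd_mono_q a a (-2) 1 0 1 m hy hs, pd_mono_q a (-(a^2/2)) (-2) 0 0 2 m hy hs]
  unfold g1 g2 kk mono
  push_cast
  simp only [zpow_neg, zpow_ofNat, zpow_one, zpow_zero, pow_zero, pow_one]
  rw [hq]
  field_simp
  ring

lemma DFqq_eqOn (a : ℝ) :
    Set.EqOn (Dtot (Fd a) (pd eq' (pd eq' (Fd a)))) (g5 a) (UU a) := by
  intro x hx
  have hy := hx.1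
  have hs := hx.2
  have hw := (wf_pos hs).ne'
  unfold Dtot
  rw [pd_congr_on (Fqq_eqOn a) hx ex, pd_congr_on (Fqq_eqOn a) hx ey,
    pd_congr_on (Fqq_eqOn a) hx ep, pd_congr_on (Fqq_eqOn a) hx eq',
    F_eqOn a hx]
  unfold g4
  rw [pd_mono_x a (3*a^2) 0 0 0 (-1) x hy hs, pd_mono_y a (3*a^2) 0 0 0 (-1) x hy hs,
    pd_mono_p a (3*a^2) 0 0 0 (-1) x hy hs, pd_mono_q a (3*a^2) 0 0 0 (-1) x hy hs]
  unfold g1 g5 mono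
  push_cast
  simp only [zpow_neg, zpow_ofNat, zpow_one, zpow_zero, pow_zero, pow_one]
  field_simp
  ring

lemma Cartan_eq (a : ℝ) (ha : a ≠ 0) {m : V4} (hm : m ∈ UU a) :
    CartanG (Fd a) m = 0 := by
  have hy := hm.1
  have hs := hm.2
  have hw := (wf_pos hs).ne'
  have hw2 := wf_sq hs
  have hq : m.2.2.2 = (wf a m ^ 2 + a * m.2.2.1 ^ 2) / (2 * a * m.2.1) := by
    rw [hw2]; unfold sq'; field_simp; ring
  simp only [CartanG, Dtot]
  rw [pd_congr_on (DFqq_eqOn a) hm ex, pd_congr_on (DFqq_eqOn a) hm ey,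
    pd_congr_on (DFqq_eqOn a) hm ep, pd_congr_on (DFqq_eqOn a) hm eq',
    pd_congr_on (Fqp_eqOn a) hm ex, pd_congr_on (Fqp_eqOn a) hm ey,
    pd_congr_on (Fqp_eqOn a) hm ep, pd_congr_on (Fqp_eqOn a) hm eq',
    Fqy_eq hm, F_eqOn a hm]
  unfold g5 g6
  rw [pd_mono_x a (-(3*a^3)) (-1) 0 0 0 m hy hs,
    pd_mono_y a (-(3*a^3)) (-1) 0 0 0 m hy hs,
    pd_mono_p a (-(3*a^3)) (-1) 0 0 0 m hy hs,
    pd_mono_q a (-(3*a^3)) (-1) 0 0 0 m hy hs,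
    pd_mono_x a (-(3*a^2)) (-1) 1 0 (-1) m hy hs,
    pd_mono_y a (-(3*a^2)) (-1) 1 0 (-1) m hy hs,
    pd_mono_p a (-(3*a^2)) (-1) 1 0 (-1) m hy hs,
    pd_mono_q a (-(3*a^2)) (-1) 1 0 (-1) m hy hs]
  unfold g1 mono
  push_cast
  simp only [zpow_neg, zpow_ofNat, zpow_one, zpow_zero, pow_zero, pow_one]
  rw [hq]
  field_simp
  ring

end EW

/-- Example 2: for every real `a ≠ 0`, the function `F = (a(2qy − p²))^{3/2} / y²`
satisfies both the Wuenschmann condition `A ≡ 0` and the Cartan condition `G ≡ 0`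
on `U = {y ≠ 0 and a(2qy − p²) > 0}`. -/
theorem example2_einstein_weyl (a : ℝ) (ha : a ≠ 0) :
    ∀ m ∈ {m : V4 | m.2.1 ≠ 0 ∧ a * (2 * m.2.2.2 * m.2.1 - m.2.2.1^2) > 0},
      Wu (fun m : V4 =>
          (a * (2 * m.2.2.2 * m.2.1 - m.2.2.1^2)) ^ ((3:ℝ)/2) / m.2.1^2) m = 0 ∧
      CartanG (fun m : V4 =>
          (a * (2 * m.2.2.2 * m.2.1 - m.2.2.1^2)) ^ ((3:ℝ)/2) / m.2.1^2) m = 0 := by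
  intro m hm
  have hm' : m ∈ EW.UU a := ⟨hm.1, hm.2⟩
  exact ⟨EW.Wu_eq a ha hm', EW.Cartan_eq a ha hm'⟩
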